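/- Let k ≥ 4, H₁,…,H_k ∈ [1/2, 1) with ∑ᵢ Hᵢ > k − 2, and let D ⊆ [−R,R]^k be bounded. Then with G(x,y) = |x−y|^{2−k}, the mixed norm sup_{x ∈ D} ‖G(x,·)‖_{L^{1/H₁,…,1/H_k}(D)} is finite. -/

import Mathlib

open MeasureTheory
open scoped BigOperators

/-- The mixed `L^{p₁,…,p_k}` norm, defined recursively:
`‖h‖ = (∫_{S k} ‖h(·,t)‖_{p₁,…,p_{k-1}}^{p_k} dt)^{1/p_k}`. -/
noncomputable def mixedNorm : (k : ℕ) → (Fin k → ℝ) → (Fin k → Set ℝ) →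
    ((Fin k → ℝ) → ℝ) → ℝ
  | 0, _, _, h => |h (fun i => i.elim0)|
  | k + 1, p, S, h =>
      (∫ t in S (Fin.last k),
          (mixedNorm k (fun i => p i.castSucc) (fun i => S i.castSucc)
            (fun η => h (Fin.snoc η t))) ^ p (Fin.last k)) ^ (1 / p (Fin.last k))

/-- The Euclidean norm on `ℝᵏ`. -/
noncomputable def eucNorm {k : ℕ} (x : Fin k → ℝ) : ℝ := Real.sqrt (∑ i, x i ^ 2)

lemma mixedNorm_nonneg : ∀ (k : ℕ) (p : Fin k → ℝ) (S : Fin k → Set ℝ)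
    (h : (Fin k → ℝ) → ℝ), 0 ≤ mixedNorm k p S h
  | 0, _, _, h => abs_nonneg _
  | k + 1, p, S, h => by
      rw [mixedNorm]
      apply Real.rpow_nonneg
      apply integral_nonneg
      intro t
      exact Real.rpow_nonneg (mixedNorm_nonneg k _ _ _) _

lemma mixedNorm_le : ∀ (k : ℕ) (p : Fin k → ℝ), (∀ i, 0 < p i) →
    ∀ (S : Fin k → Set ℝ) (g : Fin k → ℝ → ℝ), (∀ i t, 0 ≤ g i t) →
    ∀ (C : Fin k → ℝ), (∀ i, 0 ≤ C i) →
    (∀ i, IntegrableOn (fun t => g i t ^ p i) (S i)) →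
    (∀ i, ∫ t in S i, g i t ^ p i ≤ C i) →
    ∀ (E : Fin k → Set ℝ), (∀ i, volume (E i) = 0) →
    ∀ (c : ℝ), 0 ≤ c → ∀ (f : (Fin k → ℝ) → ℝ),
    (∀ η, (∀ i, η i ∉ E i) → |f η| ≤ c * ∏ i, g i (η i)) →
    mixedNorm k p S f ≤ c * ∏ i, C i ^ (1 / p i) := by
  intro k
  induction k with
  | zero =>
      intro p hp S g hg0 C hC0 hgint hgC E hE c hc f hf
      have := hf (fun i => i.elim0) (fun i => i.elim0)
      simpa [mixedNorm] using this
  | succ k IH =>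
      intro p hp S g hg0 C hC0 hgint hgC E hE c hc f hf
      rw [mixedNorm]
      set pl := p (Fin.last k) with hpl_def
      have hpl : 0 < pl := hp _
      set B : ℝ := ∏ i : Fin k, C i.castSucc ^ (1 / p i.castSucc) with hB
      have hB0 : 0 ≤ B := Finset.prod_nonneg fun i _ => Real.rpow_nonneg (hC0 _) _
      set M : ℝ → ℝ := fun t => mixedNorm k (fun i => p i.castSucc)
        (fun i => S i.castSucc) (fun η => f (Fin.snoc η t)) with hM
      have hM0 : ∀ t, 0 ≤ M t := fun t => mixedNorm_nonneg _ _ _ _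
      have key : ∀ t, t ∉ E (Fin.last k) → M t ≤ (c * g (Fin.last k) t) * B := by
        intro t ht
        refine IH (fun i => p i.castSucc) (fun i => hp _) (fun i => S i.castSucc)
          (fun i => g i.castSucc) (fun i s => hg0 _ _) (fun i => C i.castSucc)
          (fun i => hC0 _) (fun i => hgint _) (fun i => hgC _)
          (fun i => E i.castSucc) (fun i => hE _) _
          (mul_nonneg hc (hg0 _ _)) (fun η => f (Fin.snoc η t)) ?_
        intro η hη
        set y : Fin (k+1) → ℝ := Fin.snoc η t with hy
        have h1 : ∀ i : Fin (k+1), y i ∉ E i := by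
          intro i
          refine Fin.lastCases ?_ ?_ i
          · simpa [hy] using ht
          · intro j; simpa [hy] using hη j
        calc |f y| ≤ c * ∏ i : Fin (k+1), g i (y i) := hf y h1
          _ = c * g (Fin.last k) t * ∏ i : Fin k, g i.castSucc (η i) := by
              rw [Fin.prod_univ_castSucc]
              simp only [hy, Fin.snoc_castSucc, Fin.snoc_last]
              ring
      have hu0 : ∀ t, (0:ℝ) ≤ M t ^ pl := fun t => Real.rpow_nonneg (hM0 t) _
      have hle : ∫ t in S (Fin.last k), M t ^ pl ≤ (c*B)^pl * C (Fin.last k) := by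
        have step1 : ∫ t in S (Fin.last k), M t ^ pl
            ≤ ∫ t in S (Fin.last k), (c*B)^pl * g (Fin.last k) t ^ pl := by
          apply integral_mono_of_nonneg
          · exact Filter.Eventually.of_forall hu0
          · exact ((hgint (Fin.last k)).const_mul _)
          · apply ae_restrict_of_ae
            have hEnull : ∀ᵐ t, t ∉ E (Fin.last k) := by
              rw [MeasureTheory.ae_iff]
              simpa using hE (Fin.last k)
            filter_upwards [hEnull] with t ht
            have h2 := key t ht
            have h3 : M t ^ pl ≤ ((c * g (Fin.last k) t) * B) ^ pl :=
              Real.rpow_le_rpow (hM0 t) h2 hpl.le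
            calc M t ^ pl ≤ ((c * g (Fin.last k) t) * B) ^ pl := h3
              _ = ((c*B) * g (Fin.last k) t) ^ pl := by ring_nf
              _ = (c*B)^pl * g (Fin.last k) t ^ pl :=
                  Real.mul_rpow (mul_nonneg hc hB0) (hg0 _ _)
        have step2 : ∫ t in S (Fin.last k), (c*B)^pl * g (Fin.last k) t ^ pl
            = (c*B)^pl * ∫ t in S (Fin.last k), g (Fin.last k) t ^ pl :=
          MeasureTheory.integral_const_mul _ _
        have step3 : (c*B)^pl * ∫ t in S (Fin.last k), g (Fin.last k) t ^ pl
            ≤ (c*B)^pl * C (Fin.last k) :=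
          mul_le_mul_of_nonneg_left (hgC _) (Real.rpow_nonneg (mul_nonneg hc hB0) _)
        linarith [step1, step2 ▸ step1, step3]
      have h0 : 0 ≤ ∫ t in S (Fin.last k), M t ^ pl := integral_nonneg hu0
      calc (∫ t in S (Fin.last k), M t ^ pl) ^ (1/pl)
          ≤ ((c*B)^pl * C (Fin.last k)) ^ (1/pl) :=
            Real.rpow_le_rpow h0 hle (by positivity)
        _ = (c*B) * C (Fin.last k) ^ (1/pl) := by
            rw [Real.mul_rpow (Real.rpow_nonneg (mul_nonneg hc hB0) _) (hC0 _),
              ← Real.rpow_mul (mul_nonneg hc hB0), mul_one_div_cancel hpl.ne',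
              Real.rpow_one]
        _ = c * ∏ i : Fin (k+1), C i ^ (1 / p i) := by
            rw [Fin.prod_univ_castSucc]
            ring


lemma II_abs_rpow {a : ℝ} (ha : -1 < a) (b c : ℝ) :
    IntervalIntegrable (fun u : ℝ => |u| ^ a) volume b c := by
  have h1 : ∀ c : ℝ, 0 ≤ c → IntervalIntegrable (fun u : ℝ => |u| ^ a) volume 0 c := by
    intro c hc
    have h := intervalIntegral.intervalIntegrable_rpow' (a := 0) (b := c) ha
    rw [intervalIntegrable_iff] at h ⊢
    refine h.congr_fun ?_ measurableSet_uIoc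
    intro x hx
    rw [Set.uIoc_of_le hc] at hx
    simp only []
    rw [abs_of_pos hx.1]
  have h2 : ∀ c : ℝ, IntervalIntegrable (fun u : ℝ => |u| ^ a) volume 0 c := by
    intro c
    rcases le_total 0 c with hc | hc
    · exact h1 c hc
    · have := (IntervalIntegrable.iff_comp_neg).mp (h1 (-c) (by linarith))
      simp only [abs_neg, neg_zero, neg_neg] at this
      exact this
  exact ((h2 b).symm.trans (h2 c))

lemma eucNorm_pointwise (k : ℕ) (hk : 0 < k) (H : Fin k → ℝ) (hH : ∀ i, 0 < H i)
    {a : ℝ} (ha0 : a ≤ 0) (hsum : (∑ i, H i) * a = 2 - (k:ℝ))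
    (x η : Fin k → ℝ) (hne : ∀ i, η i ≠ x i) :
    eucNorm (x - η) ^ ((2:ℝ) - k) ≤ ∏ i, |x i - η i| ^ (H i * a) := by
  set N := eucNorm (x - η) with hN
  have hNi : ∀ i, |x i - η i| ≤ N := by
    intro i
    have h1 : (x i - η i)^2 ≤ ∑ j, (x j - η j)^2 :=
      Finset.single_le_sum (f := fun j => (x j - η j)^2) (fun j _ => sq_nonneg _)
        (Finset.mem_univ i)
    have h2 := Real.sqrt_le_sqrt h1
    rw [Real.sqrt_sq_eq_abs] at h2
    simpa [hN, eucNorm, Pi.sub_apply] using h2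
  have hpos : ∀ i, 0 < |x i - η i| :=
    fun i => abs_pos.2 (sub_ne_zero.2 (fun h => hne i h.symm))
  have hNpos : 0 < N := lt_of_lt_of_le (hpos ⟨0, hk⟩) (hNi ⟨0, hk⟩)
  have e1 : N ^ ((2:ℝ) - k) = ∏ i, N ^ (H i * a) := by
    rw [← Real.rpow_sum_of_pos hNpos]
    congr 1
    rw [← Finset.sum_mul, hsum]
  rw [e1]
  refine Finset.prod_le_prod (fun i _ => Real.rpow_nonneg hNpos.le _) ?_
  intro i _
  exact Real.rpow_le_rpow_of_nonpos (hpos i) (hNi i) (mul_nonpos_of_nonneg_of_nonpos (hH i).le ha0)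

lemma eucNorm_nonneg' {k : ℕ} (x : Fin k → ℝ) : 0 ≤ eucNorm x := Real.sqrt_nonneg _


/-- for `k ≥ 4`, `Hᵢ ∈ [1/2,1)` with `∑ Hᵢ > k-2`, `D ⊆ [-R,R]^k`,
the mixed norms `‖G(x,·)‖_{L^{1/H₁,…,1/H_k}(D)}`, `G(x,y) = |x-y|^{2-k}`, are bounded
uniformly in `x ∈ D`. -/
theorem stmt4 (k : ℕ) (hk : 4 ≤ k) (H : Fin k → ℝ)
    (hH : ∀ i, H i ∈ Set.Ico (1/2 : ℝ) 1) (hsum : (k : ℝ) - 2 < ∑ i, H i)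
    (R : ℝ) (hR : 0 < R) (D : Set (Fin k → ℝ))
    (hD : D ⊆ Set.pi Set.univ fun _ => Set.Icc (-R) R) :
    ∃ K : ℝ, ∀ x ∈ D,
      mixedNorm k (fun i => 1 / H i) (fun _ => Set.Icc (-R) R)
        (Set.indicator D fun y => eucNorm (x - y) ^ ((2:ℝ) - k)) ≤ K := by
  have hk4 : (4:ℝ) ≤ k := by exact_mod_cast hk
  set Sm : ℝ := ∑ i, H i with hSm_def
  have hSm : 0 < Sm := by linarith
  set a : ℝ := ((2:ℝ) - k) / Sm with ha_def
  have ha1 : -1 < a := by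
    rw [ha_def, lt_div_iff₀ hSm]; linarith
  have ha0 : a ≤ 0 := by
    rw [ha_def]
    rw [div_nonpos_iff]
    right
    exact ⟨by linarith, hSm.le⟩
  have hSa : Sm * a = 2 - (k:ℝ) := by
    rw [ha_def, mul_comm, div_mul_cancel₀ _ hSm.ne']
  have hHpos : ∀ i, 0 < H i := fun i => lt_of_lt_of_le (by norm_num) (hH i).1
  set J : ℝ := ∫ u in Set.Icc (-(2*R)) (2*R), |u| ^ a with hJ
  have hJ0 : 0 ≤ J :=
    integral_nonneg fun u => Real.rpow_nonneg (abs_nonneg _) _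
  have hJint : IntegrableOn (fun u : ℝ => |u| ^ a) (Set.Icc (-(2*R)) (2*R)) :=
    (intervalIntegrable_iff_integrableOn_Icc_of_le (by linarith)).mp (II_abs_rpow ha1 _ _)
  refine ⟨1 * ∏ i : Fin k, J ^ (1 / (1 / H i)), ?_⟩
  intro x hx
  have hxB : ∀ i, x i ∈ Set.Icc (-R) R := fun i => (hD hx) i (Set.mem_univ i)
  have hfun : ∀ (i : Fin k) (t : ℝ),
      (|x i - t| ^ (H i * a)) ^ ((1:ℝ) / H i) = |x i - t| ^ a := by
    intro i t
    rw [← Real.rpow_mul (abs_nonneg _)]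
    congr 1
    field_simp
    exact mul_div_cancel_left₀ a (hHpos i).ne'
  have hIOn : ∀ i : Fin k, IntegrableOn (fun t : ℝ => |x i - t| ^ a) (Set.Icc (-R) R) := by
    intro i
    have h0 : IntervalIntegrable (fun u : ℝ => |u| ^ a) volume (x i + R) (x i - R) :=
      II_abs_rpow ha1 _ _
    have h1 := h0.comp_sub_left (x i)
    have eA : x i - (x i + R) = -R := by ring
    have eB : x i - (x i - R) = R := by ring
    rw [eA, eB] at h1
    exact (intervalIntegrable_iff_integrableOn_Icc_of_le (by linarith)).mp h1
  have hIval : ∀ i : Fin k, ∫ t in Set.Icc (-R) R, |x i - t| ^ a ≤ J := by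
    intro i
    have e1 : ∫ t in Set.Icc (-R) R, |x i - t| ^ a = ∫ t in (-R)..R, |x i - t| ^ a := by
      rw [intervalIntegral.integral_of_le (by linarith), integral_Icc_eq_integral_Ioc]
    have e2 := intervalIntegral.integral_comp_sub_left (a := -R) (b := R)
      (fun u : ℝ => |u| ^ a) (x i)
    have eA : x i - (-R) = x i + R := by ring
    rw [eA] at e2
    have e3 : ∫ u in (x i - R)..(x i + R), |u| ^ a
        = ∫ u in Set.Ioc (x i - R) (x i + R), |u| ^ a :=
      intervalIntegral.integral_of_le (by linarith)
    have e4 : ∫ u in Set.Ioc (x i - R) (x i + R), |u| ^ a ≤ J := by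
      rw [hJ]
      apply setIntegral_mono_set hJint
      · exact Filter.Eventually.of_forall fun u => Real.rpow_nonneg (abs_nonneg _) _
      · apply HasSubset.Subset.eventuallyLE
        intro u hu
        have h1 := (hxB i).1
        have h2 := (hxB i).2
        rcases hu with ⟨hu1, hu2⟩
        exact ⟨by linarith, by linarith⟩
    rw [e1, e2, e3]
    exact e4
  refine le_trans (mixedNorm_le k (fun i => 1 / H i)
      (fun i => one_div_pos.mpr (hHpos i)) (fun _ => Set.Icc (-R) R)
      (fun i t => |x i - t| ^ (H i * a))
      (fun i t => Real.rpow_nonneg (abs_nonneg _) _)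
      (fun _ => J) (fun _ => hJ0) ?_ ?_
      (fun i => {x i}) (fun i => measure_singleton _)
      1 zero_le_one _ ?_) (le_of_eq rfl)
  · intro i
    exact (hIOn i).congr_fun (fun t _ => (hfun i t).symm) measurableSet_Icc
  · intro i
    have : (fun t : ℝ => (|x i - t| ^ (H i * a)) ^ ((1:ℝ) / H i))
        = fun t : ℝ => |x i - t| ^ a := funext (hfun i)
    calc ∫ t in Set.Icc (-R) R, (|x i - t| ^ (H i * a)) ^ ((1:ℝ) / H i)
        = ∫ t in Set.Icc (-R) R, |x i - t| ^ a := by rw [this]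
      _ ≤ J := hIval i
  · intro η hη
    by_cases hmem : η ∈ D
    · rw [Set.indicator_of_mem hmem, one_mul,
        abs_of_nonneg (Real.rpow_nonneg (eucNorm_nonneg' _) _)]
      exact eucNorm_pointwise k (by omega) H hHpos ha0 (by rw [← hSm_def]; exact hSa)
        x η (fun i => by simpa using hη i)
    · rw [Set.indicator_of_notMem hmem, abs_zero]
      exact mul_nonneg zero_le_one
        (Finset.prod_nonneg fun i _ => Real.rpow_nonneg (abs_nonneg _) _)
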